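/- Let p and q be real polynomials and α ≥ 0. Then the number of non-real zeros (with multiplicity) of q(x)·p'(x) + α·q'(x)·p(x) is at most Z_C(p) + Z_C(q), where Z_C denotes the number of non-real complex zeros counted with multiplicity. -/

import Mathlib

open Polynomial Finset

open scoped Classical in
/-- Number of non-real complex zeros of a real polynomial, counted with multiplicity. -/
noncomputable def ZC (p : Polynomial ℝ) : ℕ :=
  (((p.map (algebraMap ℝ ℂ)).roots).filter (fun z => z.im ≠ 0)).card

/-- Number of real zeros of a real polynomial, counted with multiplicity. -/
noncomputable def ZR (p : Polynomial ℝ) : ℕ := p.roots.card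

lemma ZC_zero : ZC 0 = 0 := by simp [ZC]

lemma ZC_add_ZR (p : Polynomial ℝ) (hp : p ≠ 0) : ZC p + ZR p = p.natDegree := by
  classical
  rw [ZC, ZR]
  set P := p.map (algebraMap ℝ ℂ) with hP
  have hsplit : p.natDegree = Multiset.card P.roots :=
    by rw [hP, ← natDegree_map (algebraMap ℝ ℂ)]; exact (IsAlgClosed.splits _).natDegree_eq_card_roots
  have hfilt : P.roots.filter (fun z => ¬ z.im ≠ 0) = p.roots.map (algebraMap ℝ ℂ) := by
    ext z
    rw [Multiset.count_filter]
    by_cases hz : z.im = 0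
    · simp only [hz, ne_eq, not_true_eq_false, not_false_eq_true, if_pos]
      have hzre : (algebraMap ℝ ℂ) z.re = z := by
        apply Complex.ext <;> simp [hz]
      rw [← hzre, Multiset.count_map_eq_count' _ _ (algebraMap ℝ ℂ).injective,
        count_roots, count_roots, eq_rootMultiplicity_map (algebraMap ℝ ℂ).injective]
    · rw [if_neg (by simpa using hz)]
      symm
      rw [Multiset.count_eq_zero]
      intro hmem
      obtain ⟨x, -, rfl⟩ := Multiset.mem_map.1 hmem
      simp at hz
  calc (P.roots.filter (fun z => z.im ≠ 0)).card + p.roots.card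
      = (P.roots.filter (fun z => z.im ≠ 0)).card
        + (P.roots.filter (fun z => ¬ z.im ≠ 0)).card := by rw [hfilt, Multiset.card_map]
    _ = Multiset.card P.roots := by
        rw [← Multiset.card_add, Multiset.filter_add_not]
    _ = p.natDegree := hsplit.symm

lemma ZC_mul (p q : Polynomial ℝ) (hp : p ≠ 0) (hq : q ≠ 0) :
    ZC (p * q) = ZC p + ZC q := by
  classical
  have hp' : p.map (algebraMap ℝ ℂ) ≠ 0 := by
    simpa [Polynomial.map_ne_zero_iff (algebraMap ℝ ℂ).injective] using hp
  have hq' : q.map (algebraMap ℝ ℂ) ≠ 0 := by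
    simpa [Polynomial.map_ne_zero_iff (algebraMap ℝ ℂ).injective] using hq
  rw [ZC, ZC, ZC, Polynomial.map_mul, roots_mul (mul_ne_zero hp' hq'),
    Multiset.filter_add, Multiset.card_add]

lemma ZC_derivative_le (p : Polynomial ℝ) (hp' : derivative p ≠ 0) :
    ZC (derivative p) ≤ ZC p := by
  have hp : p ≠ 0 := by rintro rfl; simp at hp'
  have hdeg : p.natDegree ≠ 0 := by
    intro h
    rw [p.eq_C_of_natDegree_eq_zero h] at hp'
    simp at hp'
  have h1 := ZC_add_ZR p hp
  have h2 := ZC_add_ZR (derivative p) hp'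
  have h3 : ZR p ≤ ZR (derivative p) + 1 := p.card_roots_le_derivative
  have h4 : (derivative p).natDegree ≤ p.natDegree - 1 := p.natDegree_derivative_le
  omega

lemma count_aux (P f : Polynomial ℝ)
    (hmult : ∀ r, P.rootMultiplicity r - 1 ≤ f.rootMultiplicity r)
    (hint : P.roots.toFinset.card ≤ (f.roots.toFinset \ P.roots.toFinset).card + 1) :
    Multiset.card P.roots ≤ Multiset.card f.roots + 1 := by
  classical
  calc
    Multiset.card P.roots = ∑ x ∈ P.roots.toFinset, P.roots.count x :=
      (Multiset.toFinset_sum_count_eq _).symm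
    _ = ∑ x ∈ P.roots.toFinset, (P.roots.count x - 1 + 1) :=
      (Eq.symm <| Finset.sum_congr rfl fun _ hx => tsub_add_cancel_of_le <|
        Nat.succ_le_iff.2 <| Multiset.count_pos.2 <| Multiset.mem_toFinset.1 hx)
    _ = (∑ x ∈ P.roots.toFinset, (P.rootMultiplicity x - 1)) + P.roots.toFinset.card := by
      simp only [Finset.sum_add_distrib, Finset.card_eq_sum_ones, count_roots]
    _ ≤ (∑ x ∈ P.roots.toFinset, f.rootMultiplicity x) +
          ((f.roots.toFinset \ P.roots.toFinset).card + 1) :=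
      (add_le_add (Finset.sum_le_sum fun x _ => hmult x) hint)
    _ ≤ (∑ x ∈ P.roots.toFinset, f.roots.count x) +
          ((∑ x ∈ f.roots.toFinset \ P.roots.toFinset, f.roots.count x) + 1) := by
      simp only [← count_roots]
      refine add_le_add_right (add_le_add_left ((Finset.card_eq_sum_ones _).trans_le ?_) _) _
      refine Finset.sum_le_sum fun x hx => Nat.succ_le_iff.2 <| ?_
      rw [Multiset.count_pos, ← Multiset.mem_toFinset]
      exact (Finset.mem_sdiff.1 hx).1
    _ = Multiset.card f.roots + 1 := by
      rw [← add_assoc, ← Finset.sum_union Finset.disjoint_sdiff, Finset.union_sdiff_self_eq_union,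
        ← Multiset.toFinset_sum_count_eq, ← Finset.sum_subset Finset.subset_union_right]
      intro x _ hx₂
      simpa only [Multiset.mem_toFinset, Multiset.count_eq_zero] using hx₂

lemma mult_aux (p q : Polynomial ℝ) (α : ℝ)
    (hf : q * derivative p + C α * (derivative q * p) ≠ 0) (r : ℝ) :
    (p * q).rootMultiplicity r ≤
      (q * derivative p + C α * (derivative q * p)).rootMultiplicity r + 1 := by
  have hp : p ≠ 0 := by rintro rfl; simp at hf
  have hq : q ≠ 0 := by rintro rfl; simp at hf
  set m := p.rootMultiplicity r with hm
  set n := q.rootMultiplicity r with hn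
  have hmul : (p * q).rootMultiplicity r = m + n := rootMultiplicity_mul (mul_ne_zero hp hq)
  have d1 : (X - C r) ^ (m + n - 1) ∣ q * derivative p := by
    by_cases hp' : derivative p = 0
    · simp [hp']
    · refine dvd_trans (pow_dvd_pow _ (show m + n - 1 ≤ n + (m - 1) by omega)) ?_
      rw [pow_add]
      exact mul_dvd_mul (pow_rootMultiplicity_dvd q r)
        (dvd_trans (pow_dvd_pow _ (rootMultiplicity_sub_one_le_derivative_rootMultiplicity p r))
          (pow_rootMultiplicity_dvd _ r))
  have d2 : (X - C r) ^ (m + n - 1) ∣ C α * (derivative q * p) := by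
    by_cases hq' : derivative q = 0
    · simp [hq']
    · refine Dvd.dvd.mul_left ?_ _
      refine dvd_trans (pow_dvd_pow _ (show m + n - 1 ≤ (n - 1) + m by omega)) ?_
      rw [pow_add]
      exact mul_dvd_mul
        (dvd_trans (pow_dvd_pow _ (rootMultiplicity_sub_one_le_derivative_rootMultiplicity q r))
          (pow_rootMultiplicity_dvd _ r))
        (pow_rootMultiplicity_dvd p r)
  have := (le_rootMultiplicity_iff hf).2 (dvd_add d1 d2)
  omega

lemma rolle_aux (p q : Polynomial ℝ) (α : ℝ) (hα : 0 < α)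
    (hf : q * derivative p + C α * (derivative q * p) ≠ 0) :
    (p * q).roots.toFinset.card ≤
      ((q * derivative p + C α * (derivative q * p)).roots.toFinset
        \ (p * q).roots.toFinset).card + 1 := by
  classical
  set f := q * derivative p + C α * (derivative q * p) with hfdef
  have hp : p ≠ 0 := by rintro rfl; simp [hfdef] at hf
  have hq : q ≠ 0 := by rintro rfl; simp [hfdef] at hf
  have hpq : p * q ≠ 0 := mul_ne_zero hp hq
  refine Finset.card_le_diff_of_interleaved fun x hx y hy hxy hxy' => ?_
  rw [Multiset.mem_toFinset, mem_roots hpq] at hx hy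
  set g : ℝ → ℝ := fun t => |q.eval t| ^ α * p.eval t with hg
  have hgc : Continuous g :=
    ((q.continuous.abs).rpow_const (fun x => Or.inr hα.le)).mul p.continuous
  have hg0 : ∀ z : ℝ, (p * q).IsRoot z → g z = 0 := by
    intro z hz
    rcases (show q.eval z = 0 ∨ p.eval z = 0 by
        have : p.eval z * q.eval z = 0 := by simpa [IsRoot] using hz
        exact (mul_eq_zero.1 this).symm) with h | h
    · simp [hg, h, Real.zero_rpow hα.ne']
    · simp [hg, h]
  obtain ⟨c, hc, hc0⟩ :=
    exists_deriv_eq_zero hxy hgc.continuousOn ((hg0 x hx).trans (hg0 y hy).symm)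
  have hqc : q.eval c ≠ 0 := by
    intro h
    exact hxy' c (Multiset.mem_toFinset.2 ((mem_roots hpq).2 (by simp [IsRoot, h]))) hc
  have key : ∃ K : ℝ, K ≠ 0 ∧ HasDerivAt g (K * f.eval c) c := by
    rcases hqc.lt_or_gt with hneg | hpos
    · -- q.eval c < 0
      have hpos' : 0 < -q.eval c := by linarith
      have hev : ∀ᶠ t in nhds c, q.eval t < 0 :=
        (q.continuousAt).eventually (eventually_lt_nhds hneg)
      have heq : g =ᶠ[nhds c] fun t => (-q.eval t) ^ α * p.eval t := by
        filter_upwards [hev] with t ht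
        simp [hg, abs_of_neg ht]
      have h1 : HasDerivAt (fun t => (-q.eval t) ^ α)
          (-(derivative q).eval c * α * (-q.eval c) ^ (α - 1)) c :=
        ((q.hasDerivAt c).neg).rpow_const (Or.inl hpos'.ne')
      have h2 := h1.mul (p.hasDerivAt c)
      refine ⟨-((-q.eval c) ^ (α - 1)), neg_ne_zero.2 (Real.rpow_pos_of_pos hpos' _).ne', ?_⟩
      have h3 : HasDerivAt g (-(derivative q).eval c * α * (-q.eval c) ^ (α - 1) * p.eval c
          + (-q.eval c) ^ α * (derivative p).eval c) c := h2.congr_of_eventuallyEq heq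
      convert h3 using 1
      have hrw : (-q.eval c) ^ α = (-q.eval c) ^ (α - 1) * (-q.eval c) := by
        nth_rewrite 1 [show α = α - 1 + 1 by ring]
        rw [Real.rpow_add_one hpos'.ne']
      rw [hrw]
      simp only [hfdef, eval_add, eval_mul, eval_C]
      ring
    · -- 0 < q.eval c
      have hev : ∀ᶠ t in nhds c, 0 < q.eval t :=
        (q.continuousAt).eventually (eventually_gt_nhds hpos)
      have heq : g =ᶠ[nhds c] fun t => (q.eval t) ^ α * p.eval t := by
        filter_upwards [hev] with t ht
        simp [hg, abs_of_pos ht]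
      have h1 : HasDerivAt (fun t => (q.eval t) ^ α)
          ((derivative q).eval c * α * (q.eval c) ^ (α - 1)) c :=
        (q.hasDerivAt c).rpow_const (Or.inl hqc)
      have h2 := h1.mul (p.hasDerivAt c)
      refine ⟨(q.eval c) ^ (α - 1), (Real.rpow_pos_of_pos hpos _).ne', ?_⟩
      have h3 : HasDerivAt g ((derivative q).eval c * α * (q.eval c) ^ (α - 1) * p.eval c
          + (q.eval c) ^ α * (derivative p).eval c) c := h2.congr_of_eventuallyEq heq
      convert h3 using 1
      have hrw : (q.eval c) ^ α = (q.eval c) ^ (α - 1) * (q.eval c) := by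
        nth_rewrite 1 [show α = α - 1 + 1 by ring]
        rw [Real.rpow_add_one hqc]
      rw [hrw]
      simp only [hfdef, eval_add, eval_mul, eval_C]
      ring
  obtain ⟨K, hK, hKd⟩ := key
  have hz : K * f.eval c = 0 := by rw [← hKd.deriv, hc0]
  have hfc : f.eval c = 0 := by
    rcases mul_eq_zero.1 hz with h | h
    · exact absurd h hK
    · exact h
  exact ⟨c, Multiset.mem_toFinset.2 ((mem_roots hf).2 hfc), hc.1, hc.2⟩

lemma deg_aux (p q : Polynomial ℝ) (α : ℝ)
    (hf : q * derivative p + C α * (derivative q * p) ≠ 0) :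
    (q * derivative p + C α * (derivative q * p)).natDegree + 1 ≤
      p.natDegree + q.natDegree := by
  have hd1 : (q * derivative p).natDegree ≤ p.natDegree + q.natDegree - 1 := by
    by_cases hp0 : p.natDegree = 0
    · have : derivative p = 0 := by
        rw [p.eq_C_of_natDegree_eq_zero hp0]; simp
      simp [this]
    · refine (natDegree_mul_le).trans ?_
      have := p.natDegree_derivative_le
      omega
  have hd2 : (C α * (derivative q * p)).natDegree ≤ p.natDegree + q.natDegree - 1 := by
    by_cases hq0 : q.natDegree = 0
    · have : derivative q = 0 := by
        rw [q.eq_C_of_natDegree_eq_zero hq0]; simp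
      simp [this]
    · refine (natDegree_mul_le).trans ?_
      refine le_trans (add_le_add (natDegree_C α).le natDegree_mul_le) ?_
      have := q.natDegree_derivative_le
      omega
  have hdeg : (q * derivative p + C α * (derivative q * p)).natDegree ≤
      p.natDegree + q.natDegree - 1 := (natDegree_add_le _ _).trans (max_le hd1 hd2)
  have hne : p.natDegree ≠ 0 ∨ q.natDegree ≠ 0 := by
    by_contra h
    push_neg at h
    have hp' : derivative p = 0 := by
      rw [p.eq_C_of_natDegree_eq_zero h.1]; simp
    have hq' : derivative q = 0 := by
      rw [q.eq_C_of_natDegree_eq_zero h.2]; simp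
    rw [hp', hq'] at hf
    simp at hf
  rcases hne with h | h <;> omega

theorem stmt1 (p q : Polynomial ℝ) (α : ℝ) (hα : 0 ≤ α) :
    ZC (q * derivative p + C α * (derivative q * p)) ≤ ZC p + ZC q := by
  set f := q * derivative p + C α * (derivative q * p) with hfdef
  by_cases hf : f = 0
  · rw [hf, ZC_zero]; exact Nat.zero_le _
  have hp : p ≠ 0 := by rintro rfl; simp [hfdef] at hf
  have hq : q ≠ 0 := by rintro rfl; simp [hfdef] at hf
  rcases hα.eq_or_lt with rfl | hα'
  · -- α = 0
    have hfq : f = q * derivative p := by rw [hfdef]; simp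
    have hp' : derivative p ≠ 0 := by
      rintro h; rw [hfq, h, mul_zero] at hf; exact hf rfl
    rw [hfq, ZC_mul q (derivative p) hq hp']
    have := ZC_derivative_le p hp'
    omega
  · -- 0 < α
    have e1 := ZC_add_ZR p hp
    have e2 := ZC_add_ZR q hq
    have e3 := ZC_add_ZR f hf
    have e4 : ZR p + ZR q = Multiset.card (p * q).roots := by
      rw [ZR, ZR, roots_mul (mul_ne_zero hp hq), Multiset.card_add]
    have e5 : Multiset.card (p * q).roots ≤ Multiset.card f.roots + 1 :=
      count_aux (p * q) f
        (fun r => by have := mult_aux p q α hf r; rw [← hfdef] at this; omega)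
        (rolle_aux p q α hα' hf)
    have e6 := deg_aux p q α hf
    rw [← hfdef] at e6
    have e7 : ZR f = Multiset.card f.roots := rfl
    omega
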